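/- (Special case of the bialternant.) Under the hypotheses of the column-side bialternant factorization with all ξ_j ≡ 1, the unshifted Toeplitz determinant equals det[φ̂(i-j)]_{i,j=1}^N = ∏_{l=1}^N φ_+(y_l). -/

import Mathlib

open Finset Matrix Metric Complex

/-- The `k`-th Fourier coefficient of a function, computed over the circle of radius `ρ`. -/
noncomputable def fcR (ρ : ℝ) (f : ℂ → ℂ) (k : ℤ) : ℂ :=
  (2 * (Real.pi : ℂ) * Complex.I)⁻¹ * (∮ z in C(0, ρ), f z * z ^ (-k - 1))

lemma circleIntegral_finset_sum {ι : Type*} (s : Finset ι) (f : ι → ℂ → ℂ) (c : ℂ) (R : ℝ)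
    (h : ∀ i ∈ s, CircleIntegrable (f i) c R) :
    (∮ z in C(c, R), ∑ i ∈ s, f i z) = ∑ i ∈ s, ∮ z in C(c, R), f i z := by
  simp only [circleIntegral, smul_sum]
  exact intervalIntegral.integral_finset_sum fun i hi => (circleIntegrable_iff R).mp (h i hi)

lemma cauchy_pow {r ρ : ℝ} (hρ0 : 0 < ρ) (hρr : ρ < r) {φp : ℂ → ℂ}
    (hp : DifferentiableOn ℂ φp (Metric.ball (0 : ℂ) r)) (e : ℕ) {w : ℂ}
    (hw : w ∈ Metric.ball (0 : ℂ) ρ) :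
    (∮ z in C(0, ρ), (z - w)⁻¹ * (φp z * z ^ e)) = (2 * Real.pi * Complex.I) * (φp w * w ^ e) := by
  have hd : DiffContOnCl ℂ (fun z => φp z * z ^ e) (Metric.ball (0 : ℂ) ρ) := by
    apply DifferentiableOn.diffContOnCl
    have h1 : DifferentiableOn ℂ (fun z => φp z * z ^ e) (Metric.ball (0 : ℂ) r) :=
      hp.mul ((differentiable_pow e).differentiableOn)
    apply h1.mono
    rw [closure_ball (0 : ℂ) hρ0.ne']
    exact closedBall_subset_ball hρr
  simpa only [smul_eq_mul] using hd.circleIntegral_sub_inv_smul hw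

lemma partial_fractions {N : ℕ} (hN : N ≠ 0) (y : Fin N → ℂ) (hy : Function.Injective y)
    (z : ℂ) (hz : ∀ l, z ≠ y l) :
    (∏ l, (z - y l))⁻¹ =
      ∑ l, (∏ m ∈ Finset.univ.erase l, (y l - y m))⁻¹ * (z - y l)⁻¹ := by
  have hne : ∀ m, z - y m ≠ 0 := fun m => sub_ne_zero.mpr (hz m)
  have hsum := Lagrange.sum_basis (s := (Finset.univ : Finset (Fin N))) (v := y)
    hy.injOn (Finset.univ_nonempty_iff.mpr ⟨⟨0, Nat.pos_of_ne_zero hN⟩⟩)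
  have heval := congrArg (Polynomial.eval z) hsum
  simp only [Polynomial.eval_finset_sum, Lagrange.basis, Polynomial.eval_prod,
    Lagrange.basisDivisor, Polynomial.eval_one, Polynomial.eval_mul, Polynomial.eval_C,
    Polynomial.eval_sub, Polynomial.eval_X] at heval
  -- heval : ∑ l, ∏ m ∈ erase l, ((y l - y m)⁻¹ * (z - y m)) = 1
  have key : ∀ l : Fin N,
      (∏ m ∈ Finset.univ.erase l, (z - y m)) * (∏ m, (z - y m))⁻¹ = (z - y l)⁻¹ := by
    intro l
    rw [← Finset.mul_prod_erase Finset.univ _ (Finset.mem_univ l)]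
    have hPe : (∏ m ∈ Finset.univ.erase l, (z - y m)) ≠ 0 :=
      Finset.prod_ne_zero_iff.mpr fun m _ => hne m
    rw [mul_inv, mul_comm ((z - y l)⁻¹), ← mul_assoc, mul_inv_cancel₀ hPe, one_mul]
  calc (∏ l, (z - y l))⁻¹
      = (∑ l, ∏ m ∈ Finset.univ.erase l, ((y l - y m)⁻¹ * (z - y m))) * (∏ l, (z - y l))⁻¹ := by
        rw [heval, one_mul]
    _ = ∑ l, (∏ m ∈ Finset.univ.erase l, (y l - y m))⁻¹ * (z - y l)⁻¹ := by
        rw [Finset.sum_mul]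
        refine Finset.sum_congr rfl fun l _ => ?_
        rw [Finset.prod_mul_distrib, Finset.prod_inv_distrib, mul_assoc, key l]

lemma fc_entry {N : ℕ} (hN : N ≠ 0) (y : Fin N → ℂ) (hy : Function.Injective y)
    {ρ r : ℝ} (hρ0 : 0 < ρ) (hρr : ρ < r) (hρy : ∀ l, ‖y l‖ < ρ)
    {φp : ℂ → ℂ} (hp : DifferentiableOn ℂ φp (Metric.ball (0 : ℂ) r))
    (e : ℕ) (k : ℤ) (hek : (e : ℤ) = (N : ℤ) - 1 - k) :
    fcR ρ (fun z => φp z * ∏ l, (1 - y l / z)⁻¹) k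
      = ∑ l, (∏ m ∈ Finset.univ.erase l, (y l - y m))⁻¹ * (φp (y l) * (y l) ^ e) := by
  have hπ : (2 * (Real.pi : ℂ) * Complex.I) ≠ 0 := by
    simp [Real.pi_ne_zero, Complex.I_ne_zero, Complex.ofReal_ne_zero]
  have hball : ∀ l, y l ∈ Metric.ball (0 : ℂ) ρ := by
    intro l
    rw [Metric.mem_ball, Complex.dist_eq, sub_zero]
    exact hρy l
  have hsub : Metric.sphere (0 : ℂ) ρ ⊆ Metric.ball (0 : ℂ) r := by
    intro z hz
    rw [Metric.mem_sphere] at hz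
    rw [Metric.mem_ball, hz]
    exact hρr
  set c : Fin N → ℂ := fun l => (∏ m ∈ Finset.univ.erase l, (y l - y m))⁻¹ with hc
  have habs : ∀ z ∈ Metric.sphere (0 : ℂ) ρ, ‖z‖ = ρ := by
    intro z hz
    rw [Metric.mem_sphere, Complex.dist_eq, sub_zero] at hz
    exact hz
  have hzl : ∀ z ∈ Metric.sphere (0 : ℂ) ρ, ∀ l, z ≠ y l := by
    intro z hz l h
    have := hρy l
    rw [← h, habs z hz] at this
    exact lt_irrefl _ this
  have heq : Set.EqOn (fun z => (φp z * ∏ l, (1 - y l / z)⁻¹) * z ^ (-k - 1))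
      (fun z => ∑ l, c l * ((z - y l)⁻¹ * (φp z * z ^ e))) (Metric.sphere (0 : ℂ) ρ) := by
    intro z hz
    have hz0 : z ≠ 0 := by
      intro h
      have h0 := habs z hz
      rw [h, norm_zero] at h0
      exact hρ0.ne' h0.symm
    have hzl' := hzl z hz
    have hPne : ∀ l, z - y l ≠ 0 := fun l => sub_ne_zero.mpr (hzl' l)
    have h1 : ∀ l : Fin N, (1 - y l / z)⁻¹ = z * (z - y l)⁻¹ := by
      intro l
      have h : 1 - y l / z = (z - y l) * z⁻¹ := by field_simp
      rw [h, mul_inv, inv_inv, mul_comm]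
    have h2 : (∏ l, (1 - y l / z)⁻¹) = z ^ N * (∏ l, (z - y l))⁻¹ := by
      rw [Finset.prod_congr rfl fun l _ => h1 l, Finset.prod_mul_distrib, Finset.prod_const,
        Finset.card_univ, Fintype.card_fin, Finset.prod_inv_distrib]
    have h3 : (z : ℂ) ^ (N : ℕ) * z ^ (-k - 1) = z ^ e := by
      rw [← zpow_natCast z N, ← zpow_add₀ hz0, ← zpow_natCast z e]
      congr 1
      omega
    show (φp z * ∏ l, (1 - y l / z)⁻¹) * z ^ (-k - 1)
        = ∑ l, c l * ((z - y l)⁻¹ * (φp z * z ^ e))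
    rw [h2]
    have h4 : (φp z * (z ^ N * (∏ l, (z - y l))⁻¹)) * z ^ (-k - 1)
        = (φp z * z ^ e) * (∏ l, (z - y l))⁻¹ := by
      rw [← h3]; ring
    rw [h4, partial_fractions hN y hy z hzl', Finset.mul_sum]
    exact Finset.sum_congr rfl fun l _ => by ring
  have hint : ∀ l : Fin N, CircleIntegrable
      (fun z => c l * ((z - y l)⁻¹ * (φp z * z ^ e))) 0 ρ := by
    intro l
    apply ContinuousOn.circleIntegrable hρ0.le
    apply continuousOn_const.mul
    apply ContinuousOn.mul
    · apply ContinuousOn.inv₀ (continuousOn_id.sub continuousOn_const)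
      intro z hz
      exact sub_ne_zero.mpr (hzl z hz l)
    · exact (hp.continuousOn.mono hsub).mul (continuous_pow e).continuousOn
  have hI : ∀ l : Fin N, (∮ z in C(0, ρ), c l * ((z - y l)⁻¹ * (φp z * z ^ e)))
      = c l * ((2 * Real.pi * Complex.I) * (φp (y l) * (y l) ^ e)) := by
    intro l
    have hs : (∮ z in C(0, ρ), c l * ((z - y l)⁻¹ * (φp z * z ^ e)))
        = c l • ∮ z in C(0, ρ), ((z - y l)⁻¹ * (φp z * z ^ e)) := by
      simp only [smul_eq_mul] at *
      exact
        circleIntegral.integral_smul (c l) (fun z => (z - y l)⁻¹ * (φp z * z ^ e)) 0 ρ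
    rw [hs, cauchy_pow hρ0 hρr hp e (hball l), smul_eq_mul]
  unfold fcR
  rw [circleIntegral.integral_congr hρ0.le heq,
    circleIntegral_finset_sum _ _ _ _ (fun l _ => hint l),
    Finset.sum_congr rfl fun l _ => hI l, Finset.mul_sum]
  refine Finset.sum_congr rfl fun l _ => ?_
  have : (2 * (Real.pi : ℂ) * Complex.I)⁻¹ * (c l * ((2 * Real.pi * Complex.I)
      * (φp (y l) * (y l) ^ e)))
      = ((2 * (Real.pi : ℂ) * Complex.I)⁻¹ * (2 * Real.pi * Complex.I))
        * (c l * (φp (y l) * (y l) ^ e)) := by ring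
  rw [this, inv_mul_cancel₀ hπ, one_mul]

-- reindexing lemma
lemma prod_Ioi_rev {N : ℕ} (f : Fin N → Fin N → ℂ) :
    (∏ i, ∏ j ∈ Finset.Ioi i, f (Fin.rev j) (Fin.rev i)) = ∏ i, ∏ j ∈ Finset.Ioi i, f i j := by
  rw [Finset.prod_sigma', Finset.prod_sigma']
  refine Finset.prod_nbij' (fun p => ⟨Fin.rev p.2, Fin.rev p.1⟩)
    (fun p => ⟨Fin.rev p.2, Fin.rev p.1⟩) ?_ ?_ ?_ ?_ ?_ <;>
    simp [Finset.mem_sigma, Fin.rev_lt_rev, Sigma.ext_iff]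

lemma prod_Iio_swap {N : ℕ} (f : Fin N → Fin N → ℂ) :
    (∏ i, ∏ j ∈ Finset.Iio i, f i j) = ∏ i, ∏ j ∈ Finset.Ioi i, f j i := by
  rw [Finset.prod_sigma', Finset.prod_sigma']
  refine Finset.prod_nbij' (fun p => ⟨p.2, p.1⟩) (fun p => ⟨p.2, p.1⟩) ?_ ?_ ?_ ?_ ?_ <;>
    simp [Finset.mem_sigma, Sigma.ext_iff]

lemma erase_eq_Iio_union_Ioi {N : ℕ} (l : Fin N) :
    Finset.univ.erase l = Finset.Iio l ∪ Finset.Ioi l := by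
  ext m
  simp only [Finset.mem_erase, Finset.mem_union, Finset.mem_univ, and_true, Finset.mem_Iio,
    Finset.mem_Ioi]
  exact ne_iff_lt_or_gt

lemma det_reversed_vandermonde {N : ℕ} (y : Fin N → ℂ) :
    Matrix.det (Matrix.of fun i l : Fin N => y l ^ (N - 1 - (i : ℕ))) =
      ∏ i, ∏ j ∈ Finset.Ioi i, (y i - y j) := by
  have h1 : (Matrix.of fun i l : Fin N => y l ^ (N - 1 - (i : ℕ)))
      = ((Matrix.vandermonde y).submatrix id Fin.rev)ᵀ := by
    ext i l
    simp only [Matrix.of_apply, Matrix.transpose_apply, Matrix.submatrix_apply, id_eq,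
      Matrix.vandermonde_apply, Fin.val_rev, Nat.sub_sub]
    rw [Nat.add_comm]
  rw [h1, Matrix.det_transpose]
  have h2 : (Matrix.vandermonde y).submatrix id Fin.rev
      = ((Matrix.vandermonde y).submatrix Fin.rev id).submatrix Fin.revPerm Fin.revPerm := by
    ext i j
    simp [Matrix.submatrix, Fin.rev_rev]
  rw [h2, Matrix.det_submatrix_equiv_self]
  have h3 : (Matrix.vandermonde y).submatrix Fin.rev id = Matrix.vandermonde (y ∘ Fin.rev) := by
    ext i j
    simp [Matrix.vandermonde, Matrix.submatrix]
  rw [h3, Matrix.det_vandermonde]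
  exact prod_Ioi_rev (fun i j => y i - y j)

lemma prod_erase_eq {N : ℕ} (y : Fin N → ℂ) :
    (∏ l, ∏ m ∈ Finset.univ.erase l, (y l - y m))
      = (∏ i, ∏ j ∈ Finset.Ioi i, (y j - y i)) * ∏ i, ∏ j ∈ Finset.Ioi i, (y i - y j) := by
  have : ∀ l : Fin N, (∏ m ∈ Finset.univ.erase l, (y l - y m))
      = (∏ m ∈ Finset.Iio l, (y l - y m)) * ∏ m ∈ Finset.Ioi l, (y l - y m) := by
    intro l
    rw [erase_eq_Iio_union_Ioi, Finset.prod_union (Finset.disjoint_left.mpr (by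
      intro a ha ha'
      simp only [Finset.mem_Iio] at ha
      simp only [Finset.mem_Ioi] at ha'
      exact absurd ha' (not_lt.mpr ha.le)))]
  rw [Finset.prod_congr rfl fun l _ => this l, Finset.prod_mul_distrib]
  congr 1
  exact prod_Iio_swap (fun i j => y i - y j)

/-- Product formula for the unshifted Toeplitz determinant: with pairwise distinct `|y_l| < 1`,
`φ₋(z) = ∏ (1 - y_l/z)⁻¹`, `φ₊` analytic nonvanishing near the closed unit disk with
`φ₊(0) = 1`, and `φ = φ₋ φ₊`, one has `det[φ̂(i-j)]_{i,j=1}^N = ∏_{l=1}^N φ₊(y_l)`. -/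
theorem toeplitz_det_rank_N_rational_minus {N : ℕ} (y : Fin N → ℂ)
    (hy : Function.Injective y) (hylt : ∀ l, ‖y l‖ < 1)
    (ρ : ℝ) (hρ0 : 0 < ρ) (hρ1 : ρ < 1) (hρy : ∀ l, ‖y l‖ < ρ)
    (r : ℝ) (hr : 1 < r)
    (φp : ℂ → ℂ) (hp : DifferentiableOn ℂ φp (Metric.ball (0 : ℂ) r))
    (hp0 : φp 0 = 1) (hpne : ∀ z ∈ Metric.ball (0 : ℂ) r, φp z ≠ 0) :
    Matrix.det (Matrix.of fun i j : Fin N =>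
        fcR ρ (fun z => φp z * ∏ l, (1 - y l / z)⁻¹) ((i : ℤ) - (j : ℤ)))
      = ∏ l, φp (y l) := by
  rcases Nat.eq_zero_or_pos N with hN0 | hNpos
  · subst hN0
    simp [Matrix.det_fin_zero]
  have hN : N ≠ 0 := hNpos.ne'
  have hρr : ρ < r := hρ1.trans hr
  set c : Fin N → ℂ := fun l => (∏ m ∈ Finset.univ.erase l, (y l - y m))⁻¹ with hc
  have hmain : ∀ i j : Fin N,
      fcR ρ (fun z => φp z * ∏ l, (1 - y l / z)⁻¹) ((i : ℤ) - (j : ℤ))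
        = ∑ l, c l * (φp (y l) * (y l) ^ (N - 1 - (i : ℕ) + (j : ℕ))) := by
    intro i j
    apply fc_entry hN y hy hρ0 hρr hρy hp
    have h1 : (i : ℕ) < N := i.isLt
    omega
  have hfac : (Matrix.of fun i j : Fin N =>
      fcR ρ (fun z => φp z * ∏ l, (1 - y l / z)⁻¹) ((i : ℤ) - (j : ℤ)))
      = ((Matrix.of fun i l : Fin N => y l ^ (N - 1 - (i : ℕ))) *
          Matrix.diagonal (fun l => c l * φp (y l))) * Matrix.vandermonde y := by
    ext i j
    rw [Matrix.of_apply, hmain i j, Matrix.mul_apply]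
    refine Finset.sum_congr rfl fun l _ => ?_
    rw [Matrix.mul_diagonal, Matrix.vandermonde_apply, Matrix.of_apply, pow_add]
    ring
  rw [hfac, Matrix.det_mul, Matrix.det_mul, Matrix.det_diagonal, det_reversed_vandermonde,
    Matrix.det_vandermonde]
  have hprod : (∏ l, c l) = ((∏ i, ∏ j ∈ Finset.Ioi i, (y j - y i)) *
      ∏ i, ∏ j ∈ Finset.Ioi i, (y i - y j))⁻¹ := by
    rw [hc, Finset.prod_inv_distrib, prod_erase_eq]
  have hΔm : (∏ i, ∏ j ∈ Finset.Ioi i, (y i - y j)) ≠ 0 :=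
    Finset.prod_ne_zero_iff.mpr fun i _ => Finset.prod_ne_zero_iff.mpr fun j hj =>
      sub_ne_zero.mpr fun h => (Finset.mem_Ioi.mp hj).ne (hy h)
  have hΔp : (∏ i, ∏ j ∈ Finset.Ioi i, (y j - y i)) ≠ 0 :=
    Finset.prod_ne_zero_iff.mpr fun i _ => Finset.prod_ne_zero_iff.mpr fun j hj =>
      sub_ne_zero.mpr fun h => (Finset.mem_Ioi.mp hj).ne' (hy h)
  rw [Finset.prod_mul_distrib, hprod]
  have hkey : (∏ i, ∏ j ∈ Finset.Ioi i, (y i - y j)) *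
      (((∏ i, ∏ j ∈ Finset.Ioi i, (y j - y i)) *
        ∏ i, ∏ j ∈ Finset.Ioi i, (y i - y j))⁻¹ * ∏ l, φp (y l)) *
      ∏ i, ∏ j ∈ Finset.Ioi i, (y j - y i)
      = ((∏ i, ∏ j ∈ Finset.Ioi i, (y j - y i)) *
          ∏ i, ∏ j ∈ Finset.Ioi i, (y i - y j)) *
        ((∏ i, ∏ j ∈ Finset.Ioi i, (y j - y i)) *
          ∏ i, ∏ j ∈ Finset.Ioi i, (y i - y j))⁻¹ * ∏ l, φp (y l) := by
    ring
  rw [hkey, mul_inv_cancel₀ (mul_ne_zero hΔp hΔm), one_mul]
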